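/- Let Γ be a graph on n vertices whose complement has chromatic number k, and let F be a bipartite graph on k vertices containing no copy of K_{s,r} as a subgraph, where 2 ≤ s ≤ r and r > 2. Then Γ has a subgraph G with at least e(Γ)·e(F)/C(k,2) edges such that G contains no induced copy of K_{s,r}. -/

import Mathlib

open scoped Classical
open Finset SimpleGraph

private lemma fin2_eq_of_ne {a b c : Fin 2} (h1 : a ≠ b) (h2 : c ≠ b) : a = c := by
  omega

private lemma two_mul_choose_two' (k : ℕ) : 2 * k.choose 2 = k * (k - 1) := by
  induction k with
  | zero => simp
  | succ n ih =>
    rw [Nat.choose_succ_succ, Nat.choose_one_right, Nat.mul_add, ih, Nat.succ_sub_one]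
    cases n with
    | zero => simp
    | succ m => rw [Nat.succ_sub_one]; ring

private lemma free_lemma {V : Type*} (Γ : SimpleGraph V) {k s r : ℕ}
    (hs : 2 ≤ s) (hr : 2 < r)
    (F : SimpleGraph (Fin k)) (hFbip : F.Colorable 2)
    (hFfree : ¬ ∃ f : completeBipartiteGraph (Fin s) (Fin r) →g F, Function.Injective f)
    (c : V → Fin k) (hc : ∀ u v, c u = c v → u ≠ v → Γ.Adj u v)
    (G : SimpleGraph V)
    (hG : ∀ u v, G.Adj u v ↔ Γ.Adj u v ∧ (c u = c v ∨ F.Adj (c u) (c v))) :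
    IsEmpty (completeBipartiteGraph (Fin s) (Fin r) ↪g G) := by
  constructor
  intro e
  set φ : Fin s ⊕ Fin r → Fin k := fun x => c (e x) with hφ
  obtain ⟨χ⟩ := hFbip
  -- cross pairs: adjacency if distinct colors
  have hA : ∀ (i : Fin s) (j : Fin r), φ (Sum.inl i) ≠ φ (Sum.inr j) →
      F.Adj (φ (Sum.inl i)) (φ (Sum.inr j)) := by
    intro i j hne
    have hadj : G.Adj (e (Sum.inl i)) (e (Sum.inr j)) := by
      exact e.map_adj_iff.mpr (by simp)
    rw [hG] at hadj
    rcases hadj.2 with h | h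
    · exact absurd h hne
    · exact h
  -- injectivity within sides
  have hBl : ∀ i i' : Fin s, i ≠ i' → φ (Sum.inl i) ≠ φ (Sum.inl i') := by
    intro i i' hne heq
    have hne' : e (Sum.inl i) ≠ e (Sum.inl i') := fun h => hne (Sum.inl.inj (e.injective h))
    have hΓ : Γ.Adj (e (Sum.inl i)) (e (Sum.inl i')) := hc _ _ heq hne'
    have : G.Adj (e (Sum.inl i)) (e (Sum.inl i')) := (hG _ _).2 ⟨hΓ, Or.inl heq⟩
    rw [e.map_adj_iff] at this
    simp [completeBipartiteGraph] at this
  have hBr : ∀ j j' : Fin r, j ≠ j' → φ (Sum.inr j) ≠ φ (Sum.inr j') := by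
    intro j j' hne heq
    have hne' : e (Sum.inr j) ≠ e (Sum.inr j') := fun h => hne (Sum.inr.inj (e.injective h))
    have hΓ : Γ.Adj (e (Sum.inr j)) (e (Sum.inr j')) := hc _ _ heq hne'
    have : G.Adj (e (Sum.inr j)) (e (Sum.inr j')) := (hG _ _).2 ⟨hΓ, Or.inl heq⟩
    rw [e.map_adj_iff] at this
    simp [completeBipartiteGraph] at this
  -- no cross collisions
  have hC : ∀ (i : Fin s) (j : Fin r), φ (Sum.inl i) ≠ φ (Sum.inr j) := by
    intro i j heq
    have hsnt : Nontrivial (Fin s) := Fin.nontrivial_iff_two_le.mpr hs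
    have hrnt : Nontrivial (Fin r) := Fin.nontrivial_iff_two_le.mpr (by omega)
    obtain ⟨i₂, hi₂⟩ := exists_ne i
    obtain ⟨j₂, hj₂⟩ := exists_ne j
    obtain ⟨j₃, hj₃, hj₃'⟩ : ∃ j₃ : Fin r, j₃ ≠ j ∧ j₃ ≠ j₂ := by
      by_contra h
      push_neg at h
      have hsub : (Finset.univ : Finset (Fin r)) ⊆ {j, j₂} := by
        intro x _
        rcases Classical.em (x = j) with h2 | h2
        · simp [h2]
        · simp [h x h2]
      have := Finset.card_le_card hsub
      simp only [Finset.card_univ, Fintype.card_fin] at this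
      have := this.trans (Finset.card_insert_le _ _)
      simp at this
      omega
    set x := φ (Sum.inl i)
    have hx : φ (Sum.inr j) = x := heq.symm
    set u₂ := φ (Sum.inl i₂)
    set v₂ := φ (Sum.inr j₂)
    set v₃ := φ (Sum.inr j₃)
    have hu₂x : u₂ ≠ x := hBl i₂ i hi₂
    have hv₂x : v₂ ≠ x := by rw [← hx]; exact hBr j₂ j hj₂
    have hv₃x : v₃ ≠ x := by rw [← hx]; exact hBr j₃ j hj₃
    have hv₃v₂ : v₃ ≠ v₂ := hBr j₃ j₂ hj₃'
    have hadj1 : F.Adj u₂ x := by rw [← hx]; exact hA i₂ j (by rw [hx]; exact hu₂x)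
    have hadj2 : F.Adj x v₂ := hA i j₂ hv₂x.symm
    have hadj3 : F.Adj x v₃ := hA i j₃ hv₃x.symm
    have hcu₂ : χ u₂ ≠ χ x := χ.valid hadj1
    have hcv₂ : χ v₂ ≠ χ x := fun h => χ.valid hadj2 h.symm
    have hcv₃ : χ v₃ ≠ χ x := fun h => χ.valid hadj3 h.symm
    have h23 : χ u₂ = χ v₂ := fin2_eq_of_ne hcu₂ hcv₂
    have h24 : χ u₂ = χ v₃ := fin2_eq_of_ne hcu₂ hcv₃
    rcases Classical.em (u₂ = v₂) with hcase | hcase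
    · have hne : u₂ ≠ v₃ := by rw [hcase]; exact hv₃v₂.symm
      exact χ.valid (hA i₂ j₃ hne) h24
    · exact χ.valid (hA i₂ j₂ hcase) h23
  -- build injective hom
  apply hFfree
  refine ⟨⟨φ, ?_⟩, ?_⟩
  · intro a b hab
    rcases a with i | j <;> rcases b with i' | j' <;>
      simp only [completeBipartiteGraph_adj, Sum.isLeft_inl, Sum.isRight_inl,
        Sum.isLeft_inr, Sum.isRight_inr] at hab <;> simp at hab
    · exact hA i j' (hC i j')
    · exact (hA i' j (hC i' j)).symm
  · intro a b hab
    rcases a with i | j <;> rcases b with i' | j'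
    · by_contra hne
      exact hBl i i' (fun h => hne (congrArg Sum.inl h)) hab
    · exact absurd hab (hC i j')
    · exact absurd hab.symm (hC i' j)
    · by_contra hne
      exact hBr j j' (fun h => hne (congrArg Sum.inr h)) hab

private lemma perm_filter_invariant {k : ℕ} (F : SimpleGraph (Fin k)) {a b a' b' : Fin k}
    (hab : a ≠ b) (hab' : a' ≠ b') :
    (Finset.univ.filter fun π : Equiv.Perm (Fin k) => F.Adj (π a) (π b)).card
      = (Finset.univ.filter fun π : Equiv.Perm (Fin k) => F.Adj (π a') (π b')).card := by
  obtain ⟨σ, hσa, hσb⟩ : ∃ σ : Equiv.Perm (Fin k), σ a' = a ∧ σ b' = b := by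
    set σ₁ := Equiv.swap a' a
    set b'' := σ₁ b'
    have hb''a : b'' ≠ a := by
      have : σ₁ a' = a := Equiv.swap_apply_left a' a
      intro h; exact hab' (σ₁.injective (this.trans h.symm))
    refine ⟨(Equiv.swap b'' b) * σ₁, ?_, ?_⟩
    · simp only [Equiv.Perm.mul_apply]
      rw [Equiv.swap_apply_left, Equiv.swap_apply_of_ne_of_ne hb''a.symm hab]
    · simp only [Equiv.Perm.mul_apply]
      exact Equiv.swap_apply_left b'' b
  apply Finset.card_equiv (Equiv.mulRight σ)
  intro π
  simp only [Finset.mem_filter, Finset.mem_univ, true_and, Equiv.coe_mulRight,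
    Equiv.Perm.mul_apply, hσa, hσb]

theorem stmt_0 {V : Type*} [Fintype V] (Γ : SimpleGraph V)
    (k s r : ℕ) (hs : 2 ≤ s) (hsr : s ≤ r) (hr : 2 < r)
    (hchi : Γᶜ.chromaticNumber = k)
    (F : SimpleGraph (Fin k)) (hFbip : F.Colorable 2)
    (hFfree : ¬ ∃ f : completeBipartiteGraph (Fin s) (Fin r) →g F, Function.Injective f) :
    ∃ G : SimpleGraph V, G ≤ Γ ∧
      (Γ.edgeFinset.card : ℝ) * F.edgeFinset.card / (k.choose 2) ≤ G.edgeFinset.card ∧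
      IsEmpty (completeBipartiteGraph (Fin s) (Fin r) ↪g G) := by
  by_cases hF0 : F.edgeFinset.card = 0
  · refine ⟨⊥, bot_le, by simp [hF0], ?_⟩
    constructor
    intro e
    have : (⊥ : SimpleGraph V).Adj (e (Sum.inl ⟨0, by omega⟩)) (e (Sum.inr ⟨0, by omega⟩)) :=
      e.map_adj_iff.mpr (by simp)
    simp at this
  -- main case
  have hpos : 0 < F.edgeFinset.card := Nat.pos_of_ne_zero hF0
  obtain ⟨a₀, b₀, hp⟩ : ∃ a b : Fin k, F.Adj a b := by
    obtain ⟨ed, hed⟩ := Finset.card_pos.mp hpos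
    induction ed using Sym2.ind with
    | _ x y =>
      rw [SimpleGraph.mem_edgeFinset, SimpleGraph.mem_edgeSet] at hed
      exact ⟨x, y, hed⟩
  have hab₀ : a₀ ≠ b₀ := hp.ne
  have hk2 : 2 ≤ k := by
    have : Nontrivial (Fin k) := ⟨a₀, b₀, hab₀⟩
    have h := Fintype.one_lt_card_iff_nontrivial.mpr this
    simp at h
    omega
  -- coloring of the complement
  have hcol : Γᶜ.Colorable k := chromaticNumber_le_iff_colorable.mp hchi.le
  obtain ⟨c0⟩ := hcol
  have hc0 : ∀ u v : V, c0 u = c0 v → u ≠ v → Γ.Adj u v := by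
    intro u v hcc hne
    by_contra hadj
    exact c0.valid ((Γ.compl_adj u v).mpr ⟨hne, hadj⟩) hcc
  -- the family of graphs
  set Gp : Equiv.Perm (Fin k) → SimpleGraph V := fun π =>
    { Adj := fun u v => Γ.Adj u v ∧ (c0 u = c0 v ∨ F.Adj (π (c0 u)) (π (c0 v)))
      symm := by
        constructor
        intro u v h
        refine ⟨h.1.symm, ?_⟩
        rcases h.2 with h' | h'
        · exact Or.inl h'.symm
        · exact Or.inr h'.symm
      loopless := ⟨fun u h => Γ.irrefl h.1⟩ } with hGp
  have hGpAdj : ∀ π u v, (Gp π).Adj u v ↔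
      Γ.Adj u v ∧ (c0 u = c0 v ∨ F.Adj (π (c0 u)) (π (c0 v))) := fun _ _ _ => Iff.rfl
  have hGle : ∀ π, Gp π ≤ Γ := fun π u v h => h.1
  set N : ℕ := (Finset.univ.filter fun π : Equiv.Perm (Fin k) => F.Adj (π a₀) (π b₀)).card with hN
  -- key counting identity
  have key : N * (k * k - k) = Nat.factorial k * (2 * F.edgeFinset.card) := by
    have h1 : ∑ p ∈ (Finset.univ : Finset (Fin k)).offDiag,
        (Finset.univ.filter fun π : Equiv.Perm (Fin k) => F.Adj (π p.1) (π p.2)).card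
        = (k * k - k) * N := by
      rw [Finset.sum_congr rfl (fun p hp => ?_), Finset.sum_const, smul_eq_mul,
        Finset.offDiag_card, Finset.card_univ, Fintype.card_fin]
      rw [Finset.mem_offDiag] at hp
      exact perm_filter_invariant F hp.2.2 hab₀
    have h2 : ∑ p ∈ (Finset.univ : Finset (Fin k)).offDiag,
        (Finset.univ.filter fun π : Equiv.Perm (Fin k) => F.Adj (π p.1) (π p.2)).card
        = ∑ p : Fin k × Fin k,
        (Finset.univ.filter fun π : Equiv.Perm (Fin k) => F.Adj (π p.1) (π p.2)).card := by
      apply Finset.sum_subset (Finset.subset_univ _)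
      intro p _ hpn
      have : p.1 = p.2 := by
        by_contra hne
        exact hpn (Finset.mem_offDiag.mpr ⟨Finset.mem_univ _, Finset.mem_univ _, hne⟩)
      rw [this]
      simp
    have h3 : ∑ p : Fin k × Fin k,
        (Finset.univ.filter fun π : Equiv.Perm (Fin k) => F.Adj (π p.1) (π p.2)).card
        = Nat.factorial k * (2 * F.edgeFinset.card) := by
      simp_rw [Finset.card_filter]
      rw [Finset.sum_comm]
      have : ∀ π : Equiv.Perm (Fin k),
          (∑ p : Fin k × Fin k, if F.Adj (π p.1) (π p.2) then 1 else 0)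
          = 2 * F.edgeFinset.card := by
        intro π
        rw [← Finset.card_filter, SimpleGraph.two_mul_card_edgeFinset]
        apply Finset.card_equiv (Equiv.prodCongr π π)
        intro p
        simp
      rw [Finset.sum_congr rfl (fun π _ => this π), Finset.sum_const, smul_eq_mul,
        Finset.card_univ, Fintype.card_perm, Fintype.card_fin]
    rw [mul_comm] at h1
    rw [← h3, ← h2, h1]
  -- per-edge count
  have peredge : ∀ ed ∈ Γ.edgeFinset,
      N ≤ (Finset.univ.filter fun π : Equiv.Perm (Fin k) => ed ∈ (Gp π).edgeSet).card := by
    intro ed hed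
    induction ed using Sym2.ind with
    | _ u v =>
      rw [SimpleGraph.mem_edgeFinset, SimpleGraph.mem_edgeSet] at hed
      by_cases hcc : c0 u = c0 v
      · have : (Finset.univ.filter fun π : Equiv.Perm (Fin k) => s(u,v) ∈ (Gp π).edgeSet)
            = Finset.univ := by
          apply Finset.filter_true_of_mem
          intro π _
          rw [SimpleGraph.mem_edgeSet]
          exact ⟨hed, Or.inl hcc⟩
        rw [this]
        exact Finset.card_filter_le _ _
      · have heq : (Finset.univ.filter fun π : Equiv.Perm (Fin k) => s(u,v) ∈ (Gp π).edgeSet)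
            = Finset.univ.filter fun π : Equiv.Perm (Fin k) => F.Adj (π (c0 u)) (π (c0 v)) := by
          apply Finset.filter_congr
          intro π _
          rw [SimpleGraph.mem_edgeSet, hGpAdj]
          constructor
          · intro h
            rcases h.2 with h' | h'
            · exact absurd h' hcc
            · exact h'
          · intro h
            exact ⟨hed, Or.inr h⟩
        rw [heq, hN, perm_filter_invariant F hcc hab₀]
  -- summation
  have hedgeEq : ∀ π, (Gp π).edgeFinset
      = Γ.edgeFinset.filter (fun ed => ed ∈ (Gp π).edgeSet) := by
    intro π
    ext ed
    simp only [Finset.mem_filter, SimpleGraph.mem_edgeFinset]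
    exact ⟨fun h => ⟨SimpleGraph.edgeSet_mono (hGle π) h, h⟩, fun h => h.2⟩
  have main : Γ.edgeFinset.card * N ≤ ∑ π : Equiv.Perm (Fin k), (Gp π).edgeFinset.card := by
    calc Γ.edgeFinset.card * N = ∑ _ed ∈ Γ.edgeFinset, N := by
          rw [Finset.sum_const, smul_eq_mul]
      _ ≤ ∑ ed ∈ Γ.edgeFinset,
          (Finset.univ.filter fun π : Equiv.Perm (Fin k) => ed ∈ (Gp π).edgeSet).card :=
          Finset.sum_le_sum peredge
      _ = ∑ π : Equiv.Perm (Fin k),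
          (Γ.edgeFinset.filter fun ed => ed ∈ (Gp π).edgeSet).card := by
          simp_rw [Finset.card_filter]
          exact Finset.sum_comm
      _ = ∑ π : Equiv.Perm (Fin k), (Gp π).edgeFinset.card := by
          exact Finset.sum_congr rfl fun π _ => by rw [← hedgeEq]
  -- pigeonhole
  have hfactpos : (0 : ℝ) < Nat.factorial k := by positivity
  obtain ⟨π, -, hπ⟩ := Finset.exists_le_of_sum_le (s := (Finset.univ : Finset (Equiv.Perm (Fin k))))
    (f := fun _ => ((Γ.edgeFinset.card * N : ℕ) : ℝ) / (Nat.factorial k))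
    (g := fun π => ((Gp π).edgeFinset.card : ℝ)) Finset.univ_nonempty (by
      rw [Finset.sum_const, Finset.card_univ, Fintype.card_perm, Fintype.card_fin,
        nsmul_eq_mul, mul_div_cancel₀ _ hfactpos.ne']
      calc ((Γ.edgeFinset.card * N : ℕ) : ℝ)
          ≤ ((∑ π : Equiv.Perm (Fin k), (Gp π).edgeFinset.card : ℕ) : ℝ) := by
            exact_mod_cast Nat.cast_le.mpr main
        _ = _ := by push_cast; rfl)
  -- conclude
  refine ⟨Gp π, hGle π, ?_, ?_⟩
  · -- arithmetic
    have hC : 0 < k.choose 2 := Nat.choose_pos hk2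
    have hNC : N * k.choose 2 = Nat.factorial k * F.edgeFinset.card := by
      have h2 : 2 * (N * k.choose 2) = 2 * (Nat.factorial k * F.edgeFinset.card) := by
        rw [show 2 * (N * k.choose 2) = N * (2 * k.choose 2) by ring, two_mul_choose_two',
          show k * (k - 1) = k * k - k by
            cases k with
            | zero => simp
            | succ n => rw [Nat.succ_sub_one]; exact (Nat.sub_eq_of_eq_add (by ring)).symm,
          key]
        ring
      omega
    have hNCR : ((N : ℝ) * k.choose 2 = (Nat.factorial k : ℝ) * F.edgeFinset.card) := by
      exact_mod_cast congrArg (Nat.cast : ℕ → ℝ) hNC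
    have heqR : (Γ.edgeFinset.card : ℝ) * F.edgeFinset.card / (k.choose 2)
        = ((Γ.edgeFinset.card * N : ℕ) : ℝ) / (Nat.factorial k) := by
      rw [div_eq_div_iff (by exact_mod_cast hC.ne') hfactpos.ne']
      push_cast
      nlinarith [hNCR]
    rw [heqR]
    refine le_trans hπ (le_of_eq ?_)
    norm_cast
    congr!
  · -- freeness
    apply free_lemma Γ hs hr F hFbip hFfree (fun v => π (c0 v))
    · intro u v hcc hne
      exact hc0 u v (π.injective hcc) hne
    · intro u v
      rw [hGpAdj]
      constructor
      · rintro ⟨h1, h2 | h2⟩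
        · exact ⟨h1, Or.inl (congrArg π h2)⟩
        · exact ⟨h1, Or.inr h2⟩
      · rintro ⟨h1, h2 | h2⟩
        · exact ⟨h1, Or.inl (π.injective h2)⟩
        · exact ⟨h1, Or.inr h2⟩
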